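/- Fix integers K, N, a, b with m = a*N − b*K > 0. The set DPT(K,N,a,b) of standard doubly periodic tableaux with respect to (K,N,a,b) is nonempty if and only if K > 0 and N > 0. -/

import Mathlib

/-- A standard doubly periodic tableau with respect to `(K, N, a, b)`:
a surjective function `σ : ℤ² → ℤ` with `σ(x+K, y−N) = σ(x,y)`,
`σ(x+a, y−b) = σ(x,y) + (a*N − b*K)`, whose values strictly increase in the
`x` and `y` directions. -/
def IsDPT (K N a b : ℤ) (σ : ℤ × ℤ → ℤ) : Prop :=
  Function.Surjective σ ∧
  (∀ x y : ℤ, σ (x + K, y - N) = σ (x, y)) ∧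
  (∀ x y : ℤ, σ (x + a, y - b) = σ (x, y) + (a * N - b * K)) ∧
  (∀ x y : ℤ, σ (x, y) < σ (x + 1, y)) ∧
  (∀ x y : ℤ, σ (x, y) < σ (x, y + 1))

/-- The set `DPT(K,N,a,b)` of standard doubly periodic tableaux is nonempty
iff `K > 0` and `N > 0`. -/
theorem dpt_nonempty_iff (K N a b : ℤ) (hm : 0 < a * N - b * K) :
    (∃ σ : ℤ × ℤ → ℤ, IsDPT K N a b σ) ↔ (0 < K ∧ 0 < N) := by
  constructor
  · rintro ⟨σ, -, h1, h2, h3, h4⟩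
    have hxN : ∀ (x y : ℤ) (k : ℕ), σ (x, y) + k ≤ σ (x + k, y) := by
      intro x y k
      induction k with
      | zero => simp
      | succ n ih =>
        have h := h3 (x + n) y
        have e : x + ((n : ℤ) + 1) = x + (n : ℤ) + 1 := by ring
        push_cast
        rw [e]; omega
    have hyN : ∀ (x y : ℤ) (k : ℕ), σ (x, y) + k ≤ σ (x, y + k) := by
      intro x y k
      induction k with
      | zero => simp
      | succ n ih =>
        have h := h4 x (y + n)
        have e : y + ((n : ℤ) + 1) = y + (n : ℤ) + 1 := by ring
        push_cast
        rw [e]; omega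
    have hx : ∀ (x y k : ℤ), 0 ≤ k → σ (x, y) + k ≤ σ (x + k, y) := by
      intro x y k hk
      obtain ⟨n, rfl⟩ : ∃ n : ℕ, k = (n : ℤ) := ⟨k.toNat, (Int.toNat_of_nonneg hk).symm⟩
      exact hxN x y n
    have hy : ∀ (x y k : ℤ), 0 ≤ k → σ (x, y) + k ≤ σ (x, y + k) := by
      intro x y k hk
      obtain ⟨n, rfl⟩ : ∃ n : ℕ, k = (n : ℤ) := ⟨k.toNat, (Int.toNat_of_nonneg hk).symm⟩
      exact hyN x y n
    have step : ∀ x y x' y' : ℤ, x ≤ x' → y ≤ y' →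
        σ (x, y) + (x' - x) + (y' - y) ≤ σ (x', y') := by
      intro x y x' y' hxx hyy
      have a1 := hx x y (x' - x) (by omega)
      have a2 := hy x' y (y' - y) (by omega)
      have e1 : x + (x' - x) = x' := by ring
      have e2 : y + (y' - y) = y' := by ring
      rw [e1] at a1; rw [e2] at a2
      omega
    rcases lt_trichotomy K 0 with hK | hK | hK
    · rcases lt_or_ge N 0 with hN | hN
      · -- hard case : K < 0, N < 0
        exfalso
        have P : ∀ k x y : ℤ, σ (x + k * K, y - k * N) = σ (x, y) := by
          intro k
          induction k using Int.induction_on with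
          | zero => intro x y; norm_num
          | succ i ih =>
            intro x y
            have e : ((x + ((i : ℤ) + 1) * K : ℤ), (y - ((i : ℤ) + 1) * N : ℤ)) =
                ((x + (i : ℤ) * K) + K, (y - (i : ℤ) * N) - N) := by
              simp only [Prod.mk.injEq]; constructor <;> ring
            rw [e, h1, ih]
          | pred i ih =>
            intro x y
            have h := h1 (x + (-(i : ℤ) - 1) * K) (y - (-(i : ℤ) - 1) * N)
            have e : ((x + (-(i : ℤ) - 1) * K + K : ℤ), (y - (-(i : ℤ) - 1) * N - N : ℤ)) =
                ((x + (-(i : ℤ)) * K), (y - (-(i : ℤ)) * N)) := by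
              simp only [Prod.mk.injEq]; constructor <;> ring
            rw [e, ih] at h
            exact h.symm
        have Q2 : ∀ k x y : ℤ, σ (x + k * a, y - k * b) = σ (x, y) + k * (a * N - b * K) := by
          intro k
          induction k using Int.induction_on with
          | zero => intro x y; norm_num
          | succ i ih =>
            intro x y
            have e : ((x + ((i : ℤ) + 1) * a : ℤ), (y - ((i : ℤ) + 1) * b : ℤ)) =
                ((x + (i : ℤ) * a) + a, (y - (i : ℤ) * b) - b) := by
              simp only [Prod.mk.injEq]; constructor <;> ring
            rw [e, h2, ih]; ring
          | pred i ih =>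
            intro x y
            have h := h2 (x + (-(i : ℤ) - 1) * a) (y - (-(i : ℤ) - 1) * b)
            have e : ((x + (-(i : ℤ) - 1) * a + a : ℤ), (y - (-(i : ℤ) - 1) * b - b : ℤ)) =
                ((x + (-(i : ℤ)) * a), (y - (-(i : ℤ)) * b)) := by
              simp only [Prod.mk.injEq]; constructor <;> ring
            rw [e, ih] at h
            linarith [h]
        have e1 := P (-(a * N)) 0 0
        have e2 := Q2 (K * N) (0 + -(a * N) * K) (0 - -(a * N) * N)
        rw [e1] at e2
        have e : ((0 : ℤ) + -(a * N) * K + K * N * a, (0 : ℤ) - -(a * N) * N - K * N * b) =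
            ((0 : ℤ), (0 : ℤ) + N * (a * N - b * K)) := by
          simp only [Prod.mk.injEq]; constructor <;> ring
        rw [e] at e2
        have f4 : N * (a * N - b * K) < 0 := mul_neg_of_neg_of_pos hN hm
        have s1 := step 0 (0 + N * (a * N - b * K)) 0 0 le_rfl (by linarith)
        have f3 : 0 < K * N * (a * N - b * K) := mul_pos (mul_pos_of_neg_of_neg hK hN) hm
        linarith [e2, s1, f3, f4]
      · exfalso
        have h := h1 0 0
        have s1 := step (0 + K) (0 - N) 0 0 (by omega) (by omega)
        omega
    · -- K = 0
      exfalso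
      rcases lt_trichotomy N 0 with hN | hN | hN
      · have h := h1 0 0
        have s1 := step 0 0 (0 + K) (0 - N) (by omega) (by omega)
        omega
      · rw [hK, hN] at hm; simp at hm
      · have h := h1 0 0
        have s1 := step (0 + K) (0 - N) 0 0 (by omega) (by omega)
        omega
    · rcases lt_or_ge 0 N with hN | hN
      · exact ⟨hK, hN⟩
      · exfalso
        have h := h1 0 0
        have s1 := step 0 0 (0 + K) (0 - N) (by omega) (by omega)
        omega
  · rintro ⟨hK, hN⟩
    obtain ⟨d, K', N', m', p, q, hd, hKe, hNe, hme, hpq⟩ :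
        ∃ d K' N' m' p q : ℤ, 0 < d ∧ d * K' = K ∧ d * N' = N ∧
          d * m' = a * N - b * K ∧ K' * q + N' * p = 1 := by
      have hg : 0 < Int.gcd K N := Int.gcd_pos_iff.mpr (Or.inl hK.ne')
      have hgz : (0 : ℤ) < (Int.gcd K N : ℤ) := by exact_mod_cast hg
      have hdvdK : ((Int.gcd K N : ℤ)) ∣ K := Int.gcd_dvd_left K N
      have hdvdN : ((Int.gcd K N : ℤ)) ∣ N := Int.gcd_dvd_right K N
      have hco : Int.gcd (K / (Int.gcd K N : ℤ)) (N / (Int.gcd K N : ℤ)) = 1 :=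
        Int.gcd_div_gcd_div_gcd hg
      refine ⟨(Int.gcd K N : ℤ), K / (Int.gcd K N : ℤ), N / (Int.gcd K N : ℤ),
        (a * N - b * K) / (Int.gcd K N : ℤ),
        Int.gcdB (K / (Int.gcd K N : ℤ)) (N / (Int.gcd K N : ℤ)),
        Int.gcdA (K / (Int.gcd K N : ℤ)) (N / (Int.gcd K N : ℤ)),
        hgz, Int.mul_ediv_cancel' hdvdK, Int.mul_ediv_cancel' hdvdN,
        Int.mul_ediv_cancel' (dvd_sub (hdvdN.mul_left a) (hdvdK.mul_left b)), ?_⟩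
      have hb := Int.gcd_eq_gcd_ab (K / (Int.gcd K N : ℤ)) (N / (Int.gcd K N : ℤ))
      rw [hco] at hb
      norm_num at hb
      exact hb.symm
    have hK'pos : 0 < K' := by nlinarith
    have hN'pos : 0 < N' := by nlinarith
    have hm'pos : 0 < m' := by nlinarith
    have hK'1 : 1 ≤ K' := hK'pos
    have hN'1 : 1 ≤ N' := hN'pos
    have hdK : d ≤ K := by nlinarith
    have hdN : d ≤ N := by nlinarith
    have main : ∀ s t : ℤ, N' * (K' * s + p * t) + K' * (-(N' * s) + q * t) = t := by
      intro s t; linear_combination t * hpq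
    have main2 : ∀ s t : ℤ, q * (K' * s + p * t) - p * (-(N' * s) + q * t) = s := by
      intro s t; linear_combination s * hpq
    refine ⟨fun P => d * (N' * P.1 + K' * P.2) +
      ((q * P.1 - p * P.2 - (q * a + p * b) * ((N' * P.1 + K' * P.2) / m')) % d),
      ?_, ?_, ?_, ?_, ?_⟩
    · -- surjectivity
      intro n
      have hdm : (0 : ℤ) < d * m' := mul_pos hd hm'pos
      obtain ⟨Qn, Rn, hn1, hR0, hRlt⟩ :
          ∃ Qn Rn : ℤ, d * m' * Qn + Rn = n ∧ 0 ≤ Rn ∧ Rn < d * m' :=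
        ⟨n / (d * m'), n % (d * m'), Int.mul_ediv_add_emod n (d * m'),
          Int.emod_nonneg n hdm.ne', Int.emod_lt_of_pos n hdm⟩
      obtain ⟨i, j, hn2, hj0, hjlt, hi0, hilt⟩ :
          ∃ i j : ℤ, d * i + j = Rn ∧ 0 ≤ j ∧ j < d ∧ 0 ≤ i ∧ i < m' := by
        refine ⟨Rn / d, Rn % d, Int.mul_ediv_add_emod Rn d, Int.emod_nonneg Rn hd.ne',
          Int.emod_lt_of_pos Rn hd, Int.ediv_nonneg hR0 hd.le, ?_⟩
        exact (Int.ediv_lt_iff_lt_mul hd).mpr (by rwa [mul_comm m' d])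
      refine ⟨(K' * (j + (q * a + p * b) * Qn) + p * (i + m' * Qn),
               -(N' * (j + (q * a + p * b) * Qn)) + q * (i + m' * Qn)), ?_⟩
      dsimp only
      rw [main, main2]
      have hdiv : (i + m' * Qn) / m' = Qn := by
        rw [show i + m' * Qn = i + Qn * m' by ring]
        rw [Int.add_mul_ediv_right i Qn hm'pos.ne']
        rw [Int.ediv_eq_zero_of_lt hi0 hilt, zero_add]
      rw [hdiv]
      have hmod : (j + (q * a + p * b) * Qn - (q * a + p * b) * Qn) % d = j := by
        rw [show j + (q * a + p * b) * Qn - (q * a + p * b) * Qn = j by ring]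
        exact Int.emod_eq_of_lt hj0 hjlt
      rw [hmod]
      linear_combination hn1 + hn2
    · -- first periodicity
      intro x y
      dsimp only
      have e1 : N' * (x + K) + K' * (y - N) = N' * x + K' * y := by
        linear_combination (-N') * hKe + K' * hNe
      rw [e1]
      have e2 : q * (x + K) - p * (y - N) - (q * a + p * b) * ((N' * x + K' * y) / m')
          = (q * x - p * y - (q * a + p * b) * ((N' * x + K' * y) / m')) + d * 1 := by
        linear_combination (-q) * hKe + (-p) * hNe + d * hpq
      rw [e2, Int.add_mul_emod_self_left]
    · -- second periodicity
      intro x y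
      dsimp only
      have hNK : N' * a - K' * b = m' := by
        have key : d * (N' * a - K' * b) = d * m' := by
          linear_combination a * hNe - b * hKe - hme
        exact mul_left_cancel₀ hd.ne' key
      have e1 : N' * (x + a) + K' * (y - b) = (N' * x + K' * y) + 1 * m' := by
        linear_combination hNK
      rw [e1, Int.add_mul_ediv_right _ _ hm'pos.ne']
      have e2 : q * (x + a) - p * (y - b) - (q * a + p * b) * ((N' * x + K' * y) / m' + 1)
          = q * x - p * y - (q * a + p * b) * ((N' * x + K' * y) / m') := by ring
      rw [e2]
      linear_combination hme
    · -- x-monotone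
      intro x y
      dsimp only
      have b1 := Int.emod_lt_of_pos
        (q * x - p * y - (q * a + p * b) * ((N' * x + K' * y) / m')) hd
      have b2 := Int.emod_nonneg
        (q * (x + 1) - p * y - (q * a + p * b) * ((N' * (x + 1) + K' * y) / m')) hd.ne'
      have e : d * (N' * (x + 1) + K' * y) = d * (N' * x + K' * y) + N := by
        linear_combination hNe
      linarith [hdN]
    · -- y-monotone
      intro x y
      dsimp only
      have b1 := Int.emod_lt_of_pos
        (q * x - p * y - (q * a + p * b) * ((N' * x + K' * y) / m')) hd
      have b2 := Int.emod_nonneg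
        (q * x - p * (y + 1) - (q * a + p * b) * ((N' * x + K' * (y + 1)) / m')) hd.ne'
      have e : d * (N' * x + K' * (y + 1)) = d * (N' * x + K' * y) + K := by
        linear_combination hKe
      linarith [hdK]
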